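/- arXiv:2602.14185 — 2 statements merged into one kernel-verified Lean document; each statement's English description precedes it below -/
import Mathlib

section
/- Lemma (game stationarity controls optimization stationarity). Let f be ℓ-smooth and satisfy the standing assumptions. Fix x ∈ X and y ∈ Y, set Φ(z) := max_{y'∈Y} f(z,y') for z ∈ X, and let p denote the unique minimizer over z ∈ X of Φ(z) + ℓ‖z − x‖². Then for every u ∈ N_X(x) and every v ∈ N_Y(y): ‖p − x‖² ≤ (2·D_Y/ℓ)·‖−∇_y f(x,y) + v‖ + (1/ℓ²)·‖∇_x f(x,y) + u‖². -/
open Set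
open Topology Filter

noncomputable section

/-- Euclidean space `ℝ^m`. -/
abbrev Euc (m : ℕ) : Type := EuclideanSpace ℝ (Fin m)


/-- Derivative of `h` along a line, from a gradient. -/
lemma line_hasDerivAt {m : ℕ} {h : Euc m → ℝ} {g : Euc m} {a v : Euc m} {t : ℝ}
    (hg : HasGradientAt h g (a + t • v)) :
    HasDerivAt (fun s : ℝ => h (a + s • v)) (inner ℝ g v : ℝ) t := by
  have hline : HasDerivAt (fun s : ℝ => a + s • v) v t := by
    simpa using ((hasDerivAt_id t).smul_const v).const_add a
  have := (hg.hasFDerivAt).comp_hasDerivAt t hline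
  exact this

/-- Helper: F 0 ≤ F 1 if F has nonnegative derivative on (0,∞). -/
lemma zero_le_one_of_deriv {F F' : ℝ → ℝ} (hF : ∀ t, HasDerivAt F (F' t) t)
    (h0 : ∀ t > (0:ℝ), 0 ≤ F' t) : F 0 ≤ F 1 := by
  have hd : Differentiable ℝ F := fun t => (hF t).differentiableAt
  have hmono : MonotoneOn F (Set.Ici (0:ℝ)) := by
    apply monotoneOn_of_deriv_nonneg (convex_Ici 0) hd.continuous.continuousOn
      (fun t _ => (hd t).differentiableWithinAt)
    intro t ht
    rw [interior_Ici] at ht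
    rw [(hF t).deriv]
    exact h0 t ht
  exact hmono (by norm_num) (by norm_num) zero_le_one

/-- Two-sided Taylor bound from a Lipschitz gradient. -/
lemma taylor_two_sided {m : ℕ} {h : Euc m → ℝ} {g : Euc m → Euc m} {l : ℝ}
    (hg : ∀ z, HasGradientAt h (g z) z)
    (hlip : ∀ z z', ‖g z - g z'‖ ≤ l * ‖z - z'‖) (a b : Euc m) :
    |h b - h a - (inner ℝ (g a) (b - a) : ℝ)| ≤ l / 2 * ‖b - a‖ ^ 2 := by
  set v := b - a with hv
  have hline : ∀ t : ℝ, HasDerivAt (fun s : ℝ => h (a + s • v))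
      (inner ℝ (g (a + t • v)) v : ℝ) t := fun t => line_hasDerivAt (hg _)
  have hIbound : ∀ t > (0:ℝ),
      |(inner ℝ (g (a + t • v)) v : ℝ) - (inner ℝ (g a) v : ℝ)| ≤ l * t * ‖v‖ ^ 2 := by
    intro t ht
    have h1 : (inner ℝ (g (a + t • v)) v : ℝ) - (inner ℝ (g a) v : ℝ)
        = (inner ℝ (g (a + t • v) - g a) v : ℝ) := by rw [inner_sub_left]
    rw [h1]
    have h2 : |(inner ℝ (g (a + t • v) - g a) v : ℝ)| ≤ ‖g (a + t • v) - g a‖ * ‖v‖ :=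
      abs_real_inner_le_norm _ _
    have h3 : ‖g (a + t • v) - g a‖ ≤ l * (t * ‖v‖) := by
      have := hlip (a + t • v) a
      simpa [add_sub_cancel_left, norm_smul, abs_of_pos ht] using this
    calc |(inner ℝ (g (a + t • v) - g a) v : ℝ)| ≤ ‖g (a + t • v) - g a‖ * ‖v‖ := h2
      _ ≤ l * (t * ‖v‖) * ‖v‖ := by
          apply mul_le_mul_of_nonneg_right h3 (norm_nonneg _)
      _ = l * t * ‖v‖ ^ 2 := by ring
  have key : ∀ c : ℝ, (c = 1 ∨ c = -1) →
      c * (h b - h a - (inner ℝ (g a) v : ℝ)) ≤ l / 2 * ‖v‖ ^ 2 := by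
    intro c hc
    set F : ℝ → ℝ := fun t => l / 2 * ‖v‖ ^ 2 * t ^ 2
      - c * (h (a + t • v) - t * (inner ℝ (g a) v : ℝ) - h a) with hF
    have hF' : ∀ t, HasDerivAt F
        (l / 2 * ‖v‖ ^ 2 * (2 * t)
          - c * ((inner ℝ (g (a + t • v)) v : ℝ) - (inner ℝ (g a) v : ℝ))) t := by
      intro t
      have h1 : HasDerivAt (fun t : ℝ => l / 2 * ‖v‖ ^ 2 * t ^ 2)
          (l / 2 * ‖v‖ ^ 2 * (2 * t)) t := by
        simpa using (hasDerivAt_pow 2 t).const_mul (l / 2 * ‖v‖ ^ 2)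
      have h2 : HasDerivAt (fun t : ℝ => h (a + t • v) - t * (inner ℝ (g a) v : ℝ) - h a)
          ((inner ℝ (g (a + t • v)) v : ℝ) - (inner ℝ (g a) v : ℝ)) t := by
        simpa using ((hline t).sub ((hasDerivAt_id t).mul_const _)).sub_const (h a)
      exact h1.sub (h2.const_mul c)
    have hmono : F 0 ≤ F 1 := by
      apply zero_le_one_of_deriv hF'
      intro t ht
      have hb := hIbound t ht
      have hc2 : c * ((inner ℝ (g (a + t • v)) v : ℝ) - (inner ℝ (g a) v : ℝ))
          ≤ l * t * ‖v‖ ^ 2 := by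
        rcases hc with rfl | rfl
        · nlinarith [abs_le.mp hb]
        · nlinarith [abs_le.mp hb]
      nlinarith
    have hF0 : F 0 = 0 := by simp [hF]
    have hF1 : F 1 = l / 2 * ‖v‖ ^ 2 - c * (h b - (inner ℝ (g a) v : ℝ) - h a) := by
      simp [hF, hv]
    rw [hF0, hF1] at hmono
    nlinarith
  have k1 := key 1 (Or.inl rfl)
  have k2 := key (-1) (Or.inr rfl)
  rw [abs_le]
  constructor <;> nlinarith

/-- Gradient inequality for concave functions. -/
lemma concave_tangent {m : ℕ} {h : Euc m → ℝ} {Y : Set (Euc m)} (hc : ConcaveOn ℝ Y h)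
    {a b : Euc m} (ha : a ∈ Y) (hb : b ∈ Y) {g : Euc m} (hg : HasGradientAt h g a) :
    h b - h a ≤ (inner ℝ g (b - a) : ℝ) := by
  set v := b - a with hv
  have ha0 : a + (0:ℝ) • v = a := by simp
  have hder : HasDerivAt (fun t : ℝ => h (a + t • v)) (inner ℝ g v : ℝ) 0 :=
    line_hasDerivAt (show HasGradientAt h g (a + (0:ℝ) • v) by rwa [ha0])
  have hslope : Filter.Tendsto (slope (fun t : ℝ => h (a + t • v)) 0) (𝓝[>] (0:ℝ))
      (𝓝 (inner ℝ g v : ℝ)) :=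
    (hasDerivAt_iff_tendsto_slope.mp hder).mono_left
      (nhdsWithin_mono _ (fun t ht => ne_of_gt ht))
  refine ge_of_tendsto hslope ?_
  filter_upwards [Ioc_mem_nhdsGT one_pos] with t ht
  have hcomb := hc.2 ha hb (by linarith [ht.2] : (0:ℝ) ≤ 1 - t) ht.1.le (by ring)
  have hpt : (1 - t) • a + t • b = a + t • v := by
    rw [hv]; module
  rw [hpt] at hcomb
  have h0 : h (a + (0:ℝ) • v) = h a := by rw [ha0]
  have hslope_eq : slope (fun t : ℝ => h (a + t • v)) 0 t
      = (h (a + t • v) - h a) / t := by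
    rw [slope_def_field]; rw [h0]; ring_nf
  rw [hslope_eq, le_div_iff₀ ht.1]
  have := hcomb
  simp only [smul_eq_mul] at this
  nlinarith

/-- `f` is `l`-smooth, witnessed by the partial gradient maps `gx`, `gy`. -/
def LSmooth {n d : ℕ} (f : Euc n → Euc d → ℝ) (gx : Euc n → Euc d → Euc n)
    (gy : Euc n → Euc d → Euc d) (l : ℝ) : Prop :=
  (∀ x y, HasGradientAt (fun x' => f x' y) (gx x y) x) ∧
  (∀ x y, HasGradientAt (fun y' => f x y') (gy x y) y) ∧
  (∀ x x' y y', ‖gx x y - gx x' y'‖ ≤ l * (‖x - x'‖ + ‖y - y'‖)) ∧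
  (∀ x x' y y', ‖gy x y - gy x' y'‖ ≤ l * (‖x - x'‖ + ‖y - y'‖))

/-- Standing assumptions: `X` closed convex; `Y` nonempty compact convex
containing `0` with diameter `Dy`; `f x` concave on `Y` for every `x ∈ X`. -/
def Standing {n d : ℕ} (f : Euc n → Euc d → ℝ) (X : Set (Euc n)) (Y : Set (Euc d))
    (Dy : ℝ) : Prop :=
  IsClosed X ∧ Convex ℝ X ∧ Y.Nonempty ∧ IsCompact Y ∧ Convex ℝ Y ∧
    (0 : Euc d) ∈ Y ∧ Metric.diam Y = Dy ∧ ∀ x ∈ X, ConcaveOn ℝ Y (f x)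

set_option maxHeartbeats 2000000 in
/-- Game stationarity controls optimization stationarity:
`‖p − x‖² ≤ (2 D_Y/ℓ)·‖−∇_y f(x,y) + v‖ + (1/ℓ²)·‖∇_x f(x,y) + u‖²`
for the proximal point `p` of `Φ(z) = max_{y∈Y} f(z,y)` at `x`, and any
normal-cone elements `u ∈ N_X(x)`, `v ∈ N_Y(y)`. -/
theorem gs_controls_os
    (n d : ℕ) (f : Euc n → Euc d → ℝ) (gx : Euc n → Euc d → Euc n)
    (gy : Euc n → Euc d → Euc d) (X : Set (Euc n)) (Y : Set (Euc d))
    (l Dy : ℝ) (x p : Euc n) (y : Euc d)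
    (hl : 0 < l) (hDy : 0 < Dy)
    (hsmooth : LSmooth f gx gy l) (hstand : Standing f X Y Dy)
    (hx : x ∈ X) (hy : y ∈ Y) (hp : p ∈ X)
    -- p is the minimizer over z ∈ X of Φ(z) + ℓ‖z − x‖², where Φ(z) = max_{y'∈Y} f(z,y')
    (hmin : ∀ z ∈ X,
      sSup (f p '' Y) + l * ‖p - x‖ ^ 2 ≤ sSup (f z '' Y) + l * ‖z - x‖ ^ 2) :
    ∀ u v, (∀ s ∈ X, (inner ℝ u (s - x) : ℝ) ≤ 0) → (∀ s ∈ Y, (inner ℝ v (s - y) : ℝ) ≤ 0) →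
      ‖p - x‖ ^ 2 ≤ 2 * Dy / l * ‖-gy x y + v‖ + 1 / l ^ 2 * ‖gx x y + u‖ ^ 2 := by

  obtain ⟨hgx, hgy, hlx, hly⟩ := hsmooth
  obtain ⟨hXc, hXconv, hYne, hYcomp, hYconv, hY0, hdiam, hconc⟩ := hstand
  intro u v hu hv
  have hcont : ∀ z, Continuous (f z) := by
    intro z
    have : Differentiable ℝ (fun y' => f z y') := fun y' => (hgy z y').differentiableAt
    exact this.continuous
  have hbdd : ∀ z, BddAbove (f z '' Y) := fun z => hYcomp.bddAbove_image (hcont z).continuousOn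
  have hfle : ∀ z, ∀ w ∈ Y, f z w ≤ sSup (f z '' Y) := fun z w hw =>
    le_csSup (hbdd z) ⟨w, hw, rfl⟩
  obtain ⟨ys, hysY, hysmax⟩ := hYcomp.exists_isMaxOn hYne (hcont x).continuousOn
  have hΦx : sSup (f x '' Y) = f x ys := by
    refine le_antisymm (csSup_le (hYne.image _) ?_) (hfle x ys hysY)
    rintro _ ⟨w, hw, rfl⟩
    exact hysmax hw
  have hlipx : ∀ w : Euc d, ∀ z z' : Euc n, ‖gx z w - gx z' w‖ ≤ l * ‖z - z'‖ := by
    intro w z z'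
    simpa using hlx z z' w w
  set r := ‖p - x‖ with hr
  -- Key inequality: Φ(x) - Φ(p) ≥ (3l/2) r²
  have hFiner : ∀ t ∈ Set.Ioc (0:ℝ) 1,
      3 * l / 2 * r ^ 2 - l / 2 * t * r ^ 2 ≤ sSup (f x '' Y) - sSup (f p '' Y) := by
    intro t ht
    set m := p + t • (x - p) with hm
    have hmX : m ∈ X := by
      have h1 := hXconv hp hx (by linarith [ht.2] : (0:ℝ) ≤ 1 - t) ht.1.le (by ring)
      have h2 : (1 - t) • p + t • x = m := by rw [hm]; module
      rwa [h2] at h1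
    have hxm : x - m = (1 - t) • (x - p) := by rw [hm]; module
    have hpm : p - m = (-t) • (x - p) := by rw [hm]; module
    have hmx : m - x = (1 - t) • (p - x) := by rw [hm]; module
    have hnxp : ‖x - p‖ = r := by rw [hr, norm_sub_rev]
    have hnxm : ‖x - m‖ = (1 - t) * r := by
      rw [hxm, norm_smul, hnxp]
      simp [abs_of_nonneg (by linarith [ht.2] : (0:ℝ) ≤ 1 - t)]
    have hnpm : ‖p - m‖ = t * r := by
      rw [hpm, norm_smul, hnxp]
      simp [abs_of_pos ht.1]
    have hnmx : ‖m - x‖ = (1 - t) * r := by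
      rw [hmx, norm_smul, hr]
      simp [abs_of_nonneg (by linarith [ht.2] : (0:ℝ) ≤ 1 - t)]
    have hΦm : sSup (f m '' Y) ≤ t * sSup (f x '' Y) + (1 - t) * sSup (f p '' Y)
        + l / 2 * t * (1 - t) * r ^ 2 := by
      apply csSup_le (hYne.image _)
      rintro _ ⟨w, hw, rfl⟩
      have hT1 := taylor_two_sided (fun z => hgx z w) (hlipx w) m x
      have hT2 := taylor_two_sided (fun z => hgx z w) (hlipx w) m p
      have hA1 := (abs_le.mp hT1).1
      have hA2 := (abs_le.mp hT2).1
      have hsum : t • (x - m) + (1 - t) • (p - m) = 0 := by rw [hm]; module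
      have hinner : t * (inner ℝ (gx m w) (x - m) : ℝ)
          + (1 - t) * (inner ℝ (gx m w) (p - m) : ℝ) = 0 := by
        have : (inner ℝ (gx m w) (t • (x - m) + (1 - t) • (p - m)) : ℝ) = 0 := by
          rw [hsum, inner_zero_right]
        rw [inner_add_right, real_inner_smul_right, real_inner_smul_right] at this
        linarith
      have hfx := hfle x w hw
      have hfp := hfle p w hw
      rw [hnxm] at hA1
      rw [hnpm] at hA2
      nlinarith [mul_le_mul_of_nonneg_left hA1 ht.1.le,
        mul_le_mul_of_nonneg_left hA2 (by linarith [ht.2] : (0:ℝ) ≤ 1 - t),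
        mul_le_mul_of_nonneg_left hfx ht.1.le,
        mul_le_mul_of_nonneg_left hfp (by linarith [ht.2] : (0:ℝ) ≤ 1 - t)]
    have hminm := hmin m hmX
    rw [hnmx] at hminm
    have key : t * (3 * l / 2 * r ^ 2 - l / 2 * t * r ^ 2)
        ≤ t * (sSup (f x '' Y) - sSup (f p '' Y)) := by nlinarith
    exact le_of_mul_le_mul_left key ht.1
  have hkey : 3 * l / 2 * r ^ 2 ≤ sSup (f x '' Y) - sSup (f p '' Y) := by
    have hc : Continuous (fun t : ℝ => 3 * l / 2 * r ^ 2 - l / 2 * t * r ^ 2) :=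
      continuous_const.sub ((continuous_const.mul continuous_id).mul continuous_const)
    have htend : Tendsto (fun t : ℝ => 3 * l / 2 * r ^ 2 - l / 2 * t * r ^ 2)
        (𝓝[>] (0:ℝ)) (𝓝 (3 * l / 2 * r ^ 2)) := by
      have := (hc.tendsto 0).mono_left (nhdsWithin_le_nhds (s := Set.Ioi (0:ℝ)))
      simpa using this
    exact le_of_tendsto htend (Filter.eventually_of_mem (Ioc_mem_nhdsGT one_pos) hFiner)
  -- Bound Φ(x) ≤ f x y + Dy * B
  set A := ‖gx x y + u‖ with hA
  set B := ‖-gy x y + v‖ with hB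
  have hys1 := concave_tangent (hconc x hx) hy hysY (hgy x y)
  have hys2 : (inner ℝ (gy x y) (ys - y) : ℝ) ≤ Dy * B := by
    have hsplit : (inner ℝ (gy x y) (ys - y) : ℝ)
        = (inner ℝ (gy x y - v) (ys - y) : ℝ) + (inner ℝ v (ys - y) : ℝ) := by
      rw [inner_sub_left]; ring
    have h1 : (inner ℝ (gy x y - v) (ys - y) : ℝ) ≤ ‖gy x y - v‖ * ‖ys - y‖ :=
      real_inner_le_norm _ _
    have h2 := hv ys hysY
    have h3 : ‖ys - y‖ ≤ Dy := by
      rw [← hdiam, ← dist_eq_norm]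
      exact Metric.dist_le_diam_of_mem hYcomp.isBounded hysY hy
    have h4 : ‖gy x y - v‖ = B := by
      rw [hB, show -gy x y + v = -(gy x y - v) by abel, norm_neg]
    have h5 : ‖gy x y - v‖ * ‖ys - y‖ ≤ ‖gy x y - v‖ * Dy :=
      mul_le_mul_of_nonneg_left h3 (norm_nonneg _)
    rw [h4] at h5 h1
    linarith
  -- Bound f x y - f p y ≤ A * r + l/2 r²
  have hT := taylor_two_sided (fun z => hgx z y) (hlipx y) x p
  have hTl := (abs_le.mp hT).1
  have hxp : -(inner ℝ (gx x y) (p - x) : ℝ) ≤ A * r := by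
    have hsplit : (inner ℝ (gx x y) (p - x) : ℝ)
        = (inner ℝ (gx x y + u) (p - x) : ℝ) - (inner ℝ u (p - x) : ℝ) := by
      rw [inner_add_left]; ring
    have h1 : -(inner ℝ (gx x y + u) (p - x) : ℝ) ≤ ‖gx x y + u‖ * ‖p - x‖ := by
      have := abs_real_inner_le_norm (gx x y + u) (p - x)
      have := (abs_le.mp this).1
      linarith
    have h2 := hu p hp
    rw [hsplit]
    rw [← hA, ← hr] at h1
    linarith
  have hfp : f p y ≤ sSup (f p '' Y) := hfle p y hy
  -- Combine
  have main : l * r ^ 2 ≤ Dy * B + A * r := by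
    have c1 : sSup (f x '' Y) - f x y ≤ Dy * B := by
      rw [hΦx]; linarith
    nlinarith [hkey]
  have hl2 : (0:ℝ) < l ^ 2 := by positivity
  rw [show 2 * Dy / l * B + 1 / l ^ 2 * A ^ 2 = (2 * l * Dy * B + A ^ 2) / l ^ 2 by
    field_simp, le_div_iff₀ hl2]
  nlinarith [mul_le_mul_of_nonneg_left main (by linarith : (0:ℝ) ≤ 2 * l),
    sq_nonneg (l * r - A)]
end
end

section
/- Lemma (Moreau envelope of the hard OS instance). Let ℓ, D_Y > 0 and let h be as in the hard OS instance. Set Φ(z) := max_{y∈[0,D_Y]} h(z)·y; then Φ(z) = D_Y·h(z) for all z ∈ ℝ. Moreover, for every x ∈ ℝ with |x| ≤ 1: min_{z∈ℝ} [ Φ(z) + ℓ(z − x)² ] = (ℓ·D_Y/(3D_Y + 2))·x², and the minimum is attained at z* = (2(D_Y + 1)/(3D_Y + 2))·x. -/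
noncomputable section

/-- The function `h` of the hard OS instance. -/
def hOS (l Dy : ℝ) (x : ℝ) : ℝ :=
  if |x| ≤ 1 then l / (2 * (Dy + 1)) * x ^ 2
  else if |x| < 2 then l / (Dy + 1) - l / (2 * (Dy + 1)) * (|x| - 2) ^ 2
  else l / (Dy + 1)

/-- The derivative of `hOS` in `x`. -/
def hOS' (l Dy : ℝ) (x : ℝ) : ℝ :=
  if |x| ≤ 1 then l / (Dy + 1) * x
  else if |x| < 2 then -(l / (Dy + 1)) * (|x| - 2) * Real.sign x
  else 0

/-- Metric projection of `v` onto the interval `[0, Dy]`. -/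
def projI (Dy v : ℝ) : ℝ := max 0 (min Dy v)

/-- Value function `Φ(z) = max_{y ∈ [0, Dy]} h(z)·y` of the hard OS instance. -/
def PhiOS (l Dy : ℝ) (z : ℝ) : ℝ :=
  sSup ((fun y => hOS l Dy z * y) '' Set.Icc (0 : ℝ) Dy)

/-- `x` is an `ε`-optimization-stationary point of the hard OS instance:
the minimizer `p` of `Φ(z) + ℓ(z − x)²` over `z ∈ ℝ` satisfies `|p − x| ≤ ε/(2ℓ)`. -/
def IsOS1 (l Dy ε x : ℝ) : Prop :=
  ∃ p : ℝ, (∀ z : ℝ, PhiOS l Dy p + l * (p - x) ^ 2 ≤ PhiOS l Dy z + l * (z - x) ^ 2) ∧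
    |p - x| ≤ ε / (2 * l)

lemma hOS_lb (l Dy : ℝ) (hl : 0 < l) (hDy : 0 < Dy) {z : ℝ} (hz : ¬ |z| ≤ 1) :
    l / (2 * (Dy + 1)) ≤ hOS l Dy z := by
  have h1 : 1 < |z| := not_le.mp hz
  have hA : (0:ℝ) < Dy + 1 := by linarith
  have hc : 0 < l / (2 * (Dy + 1)) := by positivity
  have h2c : l / (Dy + 1) = 2 * (l / (2 * (Dy + 1))) := by field_simp
  unfold hOS
  rw [if_neg hz]
  split_ifs with h2
  · rw [h2c]
    have hsq : (|z| - 2) ^ 2 ≤ 1 := by nlinarith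
    nlinarith [mul_le_mul_of_nonneg_left hsq hc.le]
  · rw [h2c]; linarith

lemma hOS_nonneg (l Dy : ℝ) (hl : 0 < l) (hDy : 0 < Dy) (z : ℝ) :
    0 ≤ hOS l Dy z := by
  by_cases hz : |z| ≤ 1
  · unfold hOS; rw [if_pos hz]; positivity
  · have := hOS_lb l Dy hl hDy hz
    have : (0:ℝ) < l / (2 * (Dy + 1)) := by positivity
    linarith [hOS_lb l Dy hl hDy hz]

lemma PhiOS_eq (l Dy : ℝ) (hl : 0 < l) (hDy : 0 < Dy) (z : ℝ) :
    PhiOS l Dy z = Dy * hOS l Dy z := by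
  have h0 := hOS_nonneg l Dy hl hDy z
  unfold PhiOS
  apply IsGreatest.csSup_eq
  constructor
  · exact ⟨Dy, ⟨le_of_lt hDy, le_refl Dy⟩, mul_comm _ _⟩
  · rintro _ ⟨y, ⟨hy0, hyD⟩, rfl⟩
    calc hOS l Dy z * y ≤ hOS l Dy z * Dy := mul_le_mul_of_nonneg_left hyD h0
    _ = Dy * hOS l Dy z := mul_comm _ _

/-- Moreau envelope of the hard OS instance: `Φ(z) = D_Y·h(z)` and, for
`|x| ≤ 1`, `min_z [Φ(z) + ℓ(z − x)²] = (ℓ D_Y/(3D_Y + 2))·x²`, attained at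
`z* = (2(D_Y + 1)/(3D_Y + 2))·x`. -/
theorem moreau_envelope_hard_os_instance (l Dy : ℝ) (hl : 0 < l) (hDy : 0 < Dy) :
    (∀ z : ℝ, PhiOS l Dy z = Dy * hOS l Dy z) ∧
    ∀ x : ℝ, |x| ≤ 1 →
      (∀ z : ℝ,
        PhiOS l Dy (2 * (Dy + 1) / (3 * Dy + 2) * x)
            + l * (2 * (Dy + 1) / (3 * Dy + 2) * x - x) ^ 2
          ≤ PhiOS l Dy z + l * (z - x) ^ 2) ∧
      PhiOS l Dy (2 * (Dy + 1) / (3 * Dy + 2) * x)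
          + l * (2 * (Dy + 1) / (3 * Dy + 2) * x - x) ^ 2
        = l * Dy / (3 * Dy + 2) * x ^ 2 := by
  have hB : (0:ℝ) < 3 * Dy + 2 := by linarith
  have hA : (0:ℝ) < Dy + 1 := by linarith
  refine ⟨fun z => PhiOS_eq l Dy hl hDy z, fun x hx => ?_⟩
  set zs := 2 * (Dy + 1) / (3 * Dy + 2) * x with hzs
  have hzs1 : |zs| ≤ 1 := by
    have : |zs| = 2 * (Dy + 1) / (3 * Dy + 2) * |x| := by
      rw [hzs, abs_mul, abs_of_pos (by positivity)]
    rw [this]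
    have hr : 2 * (Dy + 1) / (3 * Dy + 2) ≤ 1 := by
      rw [div_le_one hB]; linarith
    nlinarith [abs_nonneg x]
  have hPzs : PhiOS l Dy zs = Dy * (l / (2 * (Dy + 1)) * zs ^ 2) := by
    rw [PhiOS_eq l Dy hl hDy]; unfold hOS; rw [if_pos hzs1]
  have hval : PhiOS l Dy zs + l * (zs - x) ^ 2 = l * Dy / (3 * Dy + 2) * x ^ 2 := by
    rw [hPzs, hzs]
    field_simp
    ring
  refine ⟨fun z => ?_, hval⟩
  rw [hval, PhiOS_eq l Dy hl hDy z]
  by_cases hz : |z| ≤ 1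
  · have hhz : hOS l Dy z = l / (2 * (Dy + 1)) * z ^ 2 := by
      unfold hOS; rw [if_pos hz]
    rw [hhz]
    have key : Dy * (l / (2 * (Dy + 1)) * z ^ 2) + l * (z - x) ^ 2
        - l * Dy / (3 * Dy + 2) * x ^ 2
        = l / (2 * (Dy + 1) * (3 * Dy + 2)) * ((3 * Dy + 2) * z - 2 * (Dy + 1) * x) ^ 2 := by
      field_simp
      ring
    nlinarith [mul_nonneg (le_of_lt (show (0:ℝ) < l / (2 * (Dy + 1) * (3 * Dy + 2)) by positivity))
      (sq_nonneg ((3 * Dy + 2) * z - 2 * (Dy + 1) * x))]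
  · have hlb := hOS_lb l Dy hl hDy hz
    have hx2 : x ^ 2 ≤ 1 := by
      have := abs_le.mp hx
      nlinarith [this.1, this.2]
    have h1 : l * Dy / (3 * Dy + 2) * x ^ 2 ≤ l * Dy / (3 * Dy + 2) := by
      nlinarith [show (0:ℝ) < l * Dy / (3 * Dy + 2) by positivity]
    have h2 : l * Dy / (3 * Dy + 2) ≤ Dy * (l / (2 * (Dy + 1))) := by
      rw [div_le_iff₀ hB, mul_comm Dy (l / (2 * (Dy + 1))), div_mul_eq_mul_div,
        div_mul_eq_mul_div, le_div_iff₀ (by positivity)]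
      nlinarith [mul_pos (mul_pos hl hDy) hDy]
    have h3 : Dy * (l / (2 * (Dy + 1))) ≤ Dy * hOS l Dy z :=
      mul_le_mul_of_nonneg_left hlb (le_of_lt hDy)
    nlinarith [sq_nonneg (z - x)]
end
end
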